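/- Let l > 0 be real, set s = √(1 + l²), θ = π − arctan l, and define f(z) = (l + z)/(l − z). Then f is a holomorphic bijection from the domain D = {z ∈ ℂ : Im z > 0 and |z − i| < s} onto the open wedge W_θ = {w ∈ ℂ : w ≠ 0 and 0 < arg w < θ}, and moreover f(0) = 1 and f(i) = e^{iα} where α = π − 2·arctan l. -/

import Mathlib

open Complex Real

private lemma aux_ne (l : ℝ) (z : ℂ) (hz : 0 < z.im) : (l : ℂ) - z ≠ 0 := by
  intro h
  have : z = (l : ℂ) := by linear_combination -h
  rw [this] at hz
  simp at hz

private lemma aux_im (l : ℝ) (hl : 0 < l) (z : ℂ) (hz : 0 < z.im) :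
    0 < (((l : ℂ) + z) / ((l : ℂ) - z)).im := by
  have hne : (l : ℂ) - z ≠ 0 := aux_ne l z hz
  have hnsq : 0 < Complex.normSq ((l : ℂ) - z) := by
    simpa [Complex.normSq_pos] using hne
  have : (((l : ℂ) + z) / ((l : ℂ) - z)).im
      = 2 * l * z.im / Complex.normSq ((l : ℂ) - z) := by
    rw [Complex.div_im]
    field_simp [Complex.add_im, Complex.add_re, Complex.sub_re, Complex.sub_im,
      Complex.ofReal_re, Complex.ofReal_im]
    simp only [Complex.add_im, Complex.add_re, Complex.sub_re, Complex.sub_im,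
      Complex.ofReal_re, Complex.ofReal_im]
    ring
  rw [this]
  positivity

private lemma aux_comb (l : ℝ) (hl : 0 < l) (z : ℂ) (hz : 0 < z.im) :
    (0 < l * (((l : ℂ) + z) / ((l : ℂ) - z)).re + (((l : ℂ) + z) / ((l : ℂ) - z)).im)
      ↔ Complex.normSq (z - Complex.I) < 1 + l ^ 2 := by
  have hne : (l : ℂ) - z ≠ 0 := aux_ne l z hz
  have hnsq : 0 < Complex.normSq ((l : ℂ) - z) := by
    simpa [Complex.normSq_pos] using hne
  have key : l * (((l : ℂ) + z) / ((l : ℂ) - z)).re + (((l : ℂ) + z) / ((l : ℂ) - z)).im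
      = l * (1 + l ^ 2 - Complex.normSq (z - Complex.I)) / Complex.normSq ((l : ℂ) - z) := by
    rw [Complex.div_re, Complex.div_im]
    simp [Complex.normSq_apply]
    field_simp
    ring
  rw [key]
  constructor
  · intro h
    rcases div_pos_iff.1 h with ⟨hnum, _⟩ | ⟨_, hden⟩
    · nlinarith
    · linarith
  · intro h
    apply div_pos _ hnsq
    have : 0 < 1 + l ^ 2 - Complex.normSq (z - Complex.I) := by linarith
    positivity

private lemma aux_arg (l : ℝ) (hl : 0 < l) (w : ℂ) (hw : 0 < w.im) :
    w.arg < Real.pi - Real.arctan l ↔ 0 < l * w.re + w.im := by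
  rcases le_or_gt 0 w.re with h | h
  · have h1 : w.arg ≤ Real.pi / 2 := Complex.arg_le_pi_div_two_iff.2 (Or.inl h)
    have h2 : Real.arctan l < Real.pi / 2 := Real.arctan_lt_pi_div_two l
    constructor
    · intro _; nlinarith
    · intro _; linarith
  · -- w.re < 0
    set t : ℝ := Real.sqrt (1 + l ^ 2) with ht_def
    have ht : 0 < t := Real.sqrt_pos.2 (by positivity)
    have ht2 : t ^ 2 = 1 + l ^ 2 := Real.sq_sqrt (by positivity)
    have hw0 : w ≠ 0 := by
      intro h0; rw [h0] at hw; simp at hw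
    have ha : 0 < ‖w‖ := by
      simpa [norm_pos_iff] using hw0
    have ha2 : (‖w‖) ^ 2 = w.re ^ 2 + w.im ^ 2 := by
      rw [Complex.sq_norm, Complex.normSq_apply]; ring
    have harg : w.arg = Real.arcsin ((-w).im / ‖w‖) + Real.pi :=
      Complex.arg_of_re_neg_of_im_nonneg h hw.le
    have harct : Real.arctan l = Real.arcsin (l / t) := Real.arctan_eq_arcsin l
    have hmem1 : -w.im / ‖w‖ ∈ Set.Icc (-1 : ℝ) 1 := by
      constructor
      · rw [le_div_iff₀ ha]
        nlinarith [Complex.abs_im_le_norm w, abs_nonneg w.im, le_abs_self w.im]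
      · rw [div_le_one ha]
        nlinarith [Complex.abs_im_le_norm w, le_abs_self w.im, abs_nonneg w.im]
    have hmem2 : -(l / t) ∈ Set.Icc (-1 : ℝ) 1 := by
      have hlt : l ≤ t := by
        nlinarith [ht, ht2]
      constructor
      · rw [neg_le, neg_neg, div_le_one ht]; exact hlt
      · have : 0 < l / t := by positivity
        linarith
    have hiff : Real.arcsin (-w.im / ‖w‖) < Real.arcsin (-(l / t))
        ↔ -w.im / ‖w‖ < -(l / t) :=
      Real.strictMonoOn_arcsin.lt_iff_lt hmem1 hmem2
    have hstep : w.arg < Real.pi - Real.arctan l ↔ -w.im / ‖w‖ < -(l / t) := by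
      rw [harg, harct, ← hiff]
      simp only [Complex.neg_im]
      rw [Real.arcsin_neg]
      constructor <;> intro hh <;> linarith
    rw [hstep]
    have hfin : -w.im / ‖w‖ < -(l / t) ↔ 0 < l * w.re + w.im := by
      rw [div_lt_iff₀ ha, neg_mul, neg_lt_neg_iff]
      constructor
      · intro hh
        -- l / t * abs w < w.im
        have h1 : l * ‖w‖ < w.im * t := by
          rw [div_mul_eq_mul_div, div_lt_iff₀ ht] at hh
          linarith
        have h2 : (l * ‖w‖) ^ 2 < (w.im * t) ^ 2 :=
          pow_lt_pow_left₀ h1 (by positivity) two_ne_zero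
        have h3 : (l * (-w.re)) ^ 2 < w.im ^ 2 := by
          nlinarith [ha2, ht2]
        have h4 : l * (-w.re) < w.im :=
          lt_of_pow_lt_pow_left₀ 2 hw.le h3
        linarith
      · intro hh
        rw [div_mul_eq_mul_div, div_lt_iff₀ ht]
        have h4 : l * (-w.re) < w.im := by linarith
        have h3 : (l * (-w.re)) ^ 2 < w.im ^ 2 :=
          pow_lt_pow_left₀ h4 (by nlinarith) two_ne_zero
        have h2 : (l * ‖w‖) ^ 2 < (w.im * t) ^ 2 := by
          nlinarith [ha2, ht2]
        have := lt_of_pow_lt_pow_left₀ 2 (by positivity : (0:ℝ) ≤ w.im * t) h2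
        linarith
    rw [hfin]

theorem stmt_10 (l s θ α : ℝ) (hl : 0 < l)
    (hs : s = Real.sqrt (1 + l ^ 2))
    (hθ : θ = Real.pi - Real.arctan l)
    (hα : α = Real.pi - 2 * Real.arctan l)
    (f : ℂ → ℂ)
    (hf : ∀ z : ℂ, f z = ((l : ℂ) + z) / ((l : ℂ) - z)) :
    DifferentiableOn ℂ f {z : ℂ | 0 < z.im ∧ ‖z - Complex.I‖ < s} ∧
    Set.BijOn f {z : ℂ | 0 < z.im ∧ ‖z - Complex.I‖ < s}
      {w : ℂ | w ≠ 0 ∧ 0 < w.arg ∧ w.arg < θ} ∧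
    f 0 = 1 ∧ f Complex.I = Complex.exp ((α : ℂ) * Complex.I) := by
  have hfe : f = fun z => ((l : ℂ) + z) / ((l : ℂ) - z) := funext hf
  have habs_iff : ∀ z : ℂ, ‖z - Complex.I‖ < s ↔
      Complex.normSq (z - Complex.I) < 1 + l ^ 2 := by
    intro z
    rw [hs, Complex.norm_def]
    constructor
    · intro h
      have := Real.sq_sqrt (Complex.normSq_nonneg (z - Complex.I))
      nlinarith [Real.sqrt_nonneg (Complex.normSq (z - Complex.I)),
        Real.sq_sqrt (show (0:ℝ) ≤ 1 + l ^ 2 by positivity)]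
    · intro h
      exact Real.sqrt_lt_sqrt (Complex.normSq_nonneg _) h
  -- membership characterization
  have hmem : ∀ z : ℂ, 0 < z.im →
      (f z ∈ {w : ℂ | w ≠ 0 ∧ 0 < w.arg ∧ w.arg < θ} ↔
        ‖z - Complex.I‖ < s) := by
    intro z hz
    have him : 0 < (f z).im := by rw [hf]; exact aux_im l hl z hz
    have hne0 : f z ≠ 0 := by
      intro h0; rw [h0] at him; simp at him
    have hargpos : 0 < (f z).arg := by
      rcases lt_or_eq_of_le (Complex.arg_nonneg_iff.2 him.le) with h | h
      · exact h
      · exfalso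
        have := (Complex.arg_eq_zero_iff).1 h.symm
        linarith [this.2, him]
    rw [habs_iff z, ← aux_comb l hl z hz, hθ]
    have := aux_arg l hl (f z) him
    rw [hf] at this ⊢
    constructor
    · intro hmem'
      exact this.1 hmem'.2.2
    · intro hc
      exact ⟨by rw [← hf]; exact hne0, by rw [← hf]; exact hargpos, this.2 hc⟩
  refine ⟨?_, ⟨?_, ?_, ?_⟩, ?_, ?_⟩
  · -- differentiability
    rw [hfe]
    apply DifferentiableOn.div
    · exact (differentiable_const _).add differentiable_id |>.differentiableOn
    · exact (differentiable_const _).sub differentiable_id |>.differentiableOn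
    · intro z hz
      exact aux_ne l z hz.1
  · -- MapsTo
    intro z hz
    exact (hmem z hz.1).2 hz.2
  · -- InjOn
    intro z1 hz1 z2 hz2 heq
    rw [hf, hf] at heq
    have h1 := aux_ne l z1 hz1.1
    have h2 := aux_ne l z2 hz2.1
    field_simp at heq
    have : (2 * l : ℂ) * z1 = (2 * l : ℂ) * z2 := by linear_combination heq
    have hl2 : (2 * l : ℂ) ≠ 0 := by
      simp only [ne_eq, mul_eq_zero]
      push_neg
      exact ⟨two_ne_zero, Complex.ofReal_ne_zero.2 hl.ne'⟩
    exact mul_left_cancel₀ hl2 this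
  · -- SurjOn
    intro w hw
    obtain ⟨hw0, hargpos, hargθ⟩ := hw
    have hwim : 0 < w.im := by
      rcases lt_or_eq_of_le (Complex.arg_nonneg_iff.1 hargpos.le) with h | h
      · exact h
      · exfalso
        rcases le_or_gt 0 w.re with hr | hr
        · have : w.arg = 0 := Complex.arg_eq_zero_iff.2 ⟨hr, h.symm⟩
          linarith
        · have : w.arg = Real.pi := Complex.arg_eq_pi_iff.2 ⟨hr, h.symm⟩
          rw [this, hθ] at hargθ
          have harctpos : 0 < Real.arctan l := by
            have h0 := Real.arctan_strictMono hl
            rwa [Real.arctan_zero] at h0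
          linarith [harctpos]
    have hw1 : w + 1 ≠ 0 := by
      intro h0
      have : w.im = 0 := by
        have := congrArg Complex.im h0
        simpa using this
      linarith
    set z : ℂ := (l : ℂ) * (w - 1) / (w + 1) with hz_def
    have hnsq1 : 0 < Complex.normSq (w + 1) := by
      simpa [Complex.normSq_pos] using hw1
    have hzim : 0 < z.im := by
      have : z.im = 2 * l * w.im / Complex.normSq (w + 1) := by
        rw [hz_def, Complex.div_im]
        field_simp [Complex.mul_im, Complex.mul_re, Complex.add_im, Complex.add_re,
          Complex.sub_re, Complex.sub_im, Complex.ofReal_re, Complex.ofReal_im,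
          Complex.one_re, Complex.one_im]
        simp
        ring
      rw [this]
      positivity
    have hfz : f z = w := by
      rw [hf, hz_def]
      have hlne : ((l : ℂ)) ≠ 0 := Complex.ofReal_ne_zero.2 hl.ne'
      have hden : (l : ℂ) - (l : ℂ) * (w - 1) / (w + 1) ≠ 0 := by
        rw [← hz_def]
        exact aux_ne l z hzim
      have h2l : (2 : ℂ) * l ≠ 0 := by
        simp only [ne_eq, mul_eq_zero]
        push_neg
        exact ⟨two_ne_zero, hlne⟩
      field_simp
      ring
    refine ⟨z, ⟨hzim, ?_⟩, hfz⟩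
    have := (hmem z hzim).1
    rw [hfz] at this
    exact this ⟨hw0, hargpos, hargθ⟩
  · -- f 0 = 1
    rw [hf]
    rw [add_zero, sub_zero, div_self (Complex.ofReal_ne_zero.2 hl.ne')]
  · -- f i = exp(i α)
    rw [hf]
    have h1l : (0:ℝ) < 1 + l ^ 2 := by positivity
    have hcos : Real.cos α = (l ^ 2 - 1) / (1 + l ^ 2) := by
      rw [hα, Real.cos_pi_sub, Real.cos_two_mul, Real.cos_arctan]
      rw [div_pow, one_pow, Real.sq_sqrt h1l.le]
      field_simp
      ring
    have hsin : Real.sin α = 2 * l / (1 + l ^ 2) := by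
      rw [hα, Real.sin_pi_sub, Real.sin_two_mul, Real.sin_arctan, Real.cos_arctan]
      have hsq : Real.sqrt (1 + l ^ 2) * Real.sqrt (1 + l ^ 2) = 1 + l ^ 2 :=
        Real.mul_self_sqrt h1l.le
      have hsne : Real.sqrt (1 + l ^ 2) ≠ 0 := by positivity
      field_simp
      rw [Real.sq_sqrt h1l.le]
    have hne : (l : ℂ) - Complex.I ≠ 0 := by
      intro h0
      have := congrArg Complex.im h0
      simp at this
    apply Complex.ext
    · rw [Complex.exp_ofReal_mul_I_re, hcos, Complex.div_re]
      simp [Complex.normSq_apply]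
      ring
    · rw [Complex.exp_ofReal_mul_I_im, hsin, Complex.div_im]
      simp [Complex.normSq_apply]
      ring
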